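/- Let M > 0, let x, x' ∈ ℝ³ and t' ∈ ℝ with 0 < ‖x‖ < 2M, Q_M(t', x', x) = −1, and ⟨x, x'⟩ > 0. Then ⟨x, x'⟩ / ‖x‖ ≥ √((2M − ‖x‖)/‖x‖); that is, along a unit-speed past-directed timelike curve the rate of increase ṙ of the radial coordinate r = ‖x‖ satisfies ṙ ≥ √((2M − r)/r). -/

import Mathlib

/-- The Schwarzschild quadratic form of mass `M`, evaluated on a velocity `(t', x')`
at a point with spatial part `x` (where `0 < ‖x‖ < 2M`). -/
noncomputable def QM (M : ℝ) (t' : ℝ) (x' x : EuclideanSpace ℝ (Fin 3)) : ℝ :=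
  (2 * M / ‖x‖ - 1) * t' ^ 2 + ‖x'‖ ^ 2
    - (2 * M / ((2 * M - ‖x‖) * ‖x‖ ^ 2)) * (inner ℝ x x' : ℝ) ^ 2

/-- Let `M > 0`, let `x, x' ∈ ℝ³` and `t' ∈ ℝ` with `0 < ‖x‖ < 2M`,
`Q_M(t', x', x) = −1`, and `⟨x, x'⟩ > 0`. Then `⟨x, x'⟩ / ‖x‖ ≥ √((2M − ‖x‖)/‖x‖)`;
that is, along a unit-speed past-directed timelike curve the rate of increase `ṙ` of
the radial coordinate `r = ‖x‖` satisfies `ṙ ≥ √((2M − r)/r)`. -/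
theorem radial_rate_lower_bound (M : ℝ) (hM : 0 < M)
    (x x' : EuclideanSpace ℝ (Fin 3)) (t' : ℝ)
    (h1 : 0 < ‖x‖) (h2 : ‖x‖ < 2 * M)
    (hQ : QM M t' x' x = -1) (hpd : (0 : ℝ) < inner ℝ x x') :
    Real.sqrt ((2 * M - ‖x‖) / ‖x‖) ≤ (inner ℝ x x' : ℝ) / ‖x‖ := by
  set r := ‖x‖ with hr
  set i : ℝ := inner ℝ x x' with hi
  have hcs : i ≤ r * ‖x'‖ := real_inner_le_norm x x'
  have hr2 : 0 < 2 * M - r := by linarith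
  have hnx' : 0 ≤ ‖x'‖ := norm_nonneg _
  unfold QM at hQ
  rw [← hr, ← hi] at hQ
  have hQ' : (2 * M / r - 1) * t' ^ 2 + ‖x'‖ ^ 2
      - (2 * M / ((2 * M - r) * r ^ 2)) * i ^ 2 = -1 := hQ
  have hi2 : i ^ 2 ≤ r ^ 2 * ‖x'‖ ^ 2 := by nlinarith [hcs, hpd.le]
  have ht : 0 ≤ (2 * M / r - 1) * t' ^ 2 := by
    apply mul_nonneg _ (sq_nonneg _)
    have : 1 ≤ 2 * M / r := by rw [le_div_iff₀ h1]; linarith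
    linarith
  have hr1 : (r:ℝ) ≠ 0 := ne_of_gt h1
  have hr2' : (2 * M - r) ≠ 0 := ne_of_gt hr2
  have hQp : ((2 * M - r) * t' ^ 2 + ‖x'‖ ^ 2 * r) * ((2 * M - r) * r ^ 2)
      - r * (2 * M * i ^ 2) = -(r * ((2 * M - r) * r ^ 2)) := by
    field_simp at hQ'
    linear_combination r * hQ'
  have hA : 0 ≤ (2 * M - r) * t' ^ 2 := mul_nonneg hr2.le (sq_nonneg t')
  have key : (2 * M - r) / r ≤ (i / r) ^ 2 := by
    rw [div_pow, div_le_div_iff₀ h1 (pow_pos h1 2)]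
    have main : (2 * M - r) * r ^ 3 ≤ i ^ 2 * r ^ 2 := by
      nlinarith [hQp, mul_le_mul_of_nonneg_right hi2 (mul_pos h1 hr2).le,
        mul_nonneg hA (mul_pos hr2 (pow_pos h1 2)).le, mul_pos h1 hr2]
    have : ((2 * M - r) * r ^ 2) * r ≤ (i ^ 2 * r) * r := by nlinarith [main]
    exact le_of_mul_le_mul_right this h1
  have h0 : 0 < i / r := div_pos hpd h1
  calc Real.sqrt ((2 * M - r) / r) ≤ Real.sqrt ((i / r) ^ 2) := Real.sqrt_le_sqrt key
    _ = i / r := Real.sqrt_sq h0.le
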